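/- Let G = G₁ ∗_C G₂ be the amalgamated free product of G₁ and G₂ along a subgroup C, where G and C are finitely generated. Let H be a finitely generated subgroup of G such that for every g ∈ G one has g⁻¹Hg ∩ G₁ = {1} and g⁻¹Hg ∩ G₂ = {1}. Then H is quasi-isometrically embedded in G: for any finite generating set 𝓗 of H closed under inversion and any finite generating set 𝒢 of G closed under inversion there is a constant C' > 0 such that l_𝓗(h) ≤ C'·l_𝒢(h) + C' for all h ∈ H. In particular, if G is word hyperbolic then H is quasiconvex in G. -/

import Mathlib

universe u v w

section Defs

variable {G : Type u} [Group G]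

/-- A finite generating set closed under inversion. -/
def IsSymmGen (X : Set G) : Prop :=
  X.Finite ∧ (∀ x ∈ X, x⁻¹ ∈ X) ∧ Subgroup.closure X = ⊤

/-- Word length of `g` with respect to `X`. -/
noncomputable def wordLength (X : Set G) (g : G) : ℕ :=
  sInf {n : ℕ | ∃ l : List G, l.length = n ∧ (∀ x ∈ l, x ∈ X) ∧ l.prod = g}

/-- Word metric. -/
noncomputable def wordDist (X : Set G) (g h : G) : ℕ :=
  wordLength X (g⁻¹ * h)

/-- Gromov product with respect to the word metric. -/
noncomputable def gromovProd (X : Set G) (x y w : G) : ℝ :=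
  ((wordDist X x w : ℝ) + (wordDist X y w : ℝ) - (wordDist X x y : ℝ)) / 2

end Defs

/-- A group is word hyperbolic if for some finite symmetric generating set the Gromov
product satisfies the hyperbolicity inequality. -/
def IsWordHyperbolic (G : Type u) [Group G] : Prop :=
  ∃ X : Set G, IsSymmGen X ∧ ∃ δ : ℝ, 0 ≤ δ ∧
    ∀ x y z w : G,
      gromovProd X x z w ≥ min (gromovProd X x y w) (gromovProd X y z w) - δ

/-- A subgroup is quasiconvex: it is finitely generated and word lengths distort linearly. -/
def IsQuasiconvex {G : Type u} [Group G] (A : Subgroup G) : Prop :=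
  ∃ Y : Set ↥A, IsSymmGen Y ∧ ∃ X : Set G, IsSymmGen X ∧ ∃ c : ℝ, 0 < c ∧
    ∀ a : ↥A, (wordLength Y a : ℝ) ≤ c * (wordLength X (a : G) : ℝ) + c

/-- Property (Q): every finitely generated subgroup is quasiconvex. -/
def HasPropertyQ (G : Type u) [Group G] : Prop :=
  ∀ H : Subgroup G, H.FG → IsQuasiconvex H

/-- A group is virtually cyclic if it has a cyclic subgroup of finite index. -/
def IsVirtuallyCyclic (C : Type u) [Group C] : Prop :=
  ∃ Z : Subgroup C, IsCyclic ↥Z ∧ Z.FiniteIndex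

/-- `G` is the amalgamated free product of its subgroups `A` and `B` along `C`:
`C = A ⊓ B`, `A ⊔ B = ⊤` and `G` has the pushout universal property. -/
structure IsAmalgamatedFreeProduct {G : Type u} [Group G] (A B C : Subgroup G) : Prop where
  le_left : C ≤ A
  le_right : C ≤ B
  inf_eq : A ⊓ B = C
  sup_eq_top : A ⊔ B = ⊤
  univ : ∀ (K : Type u) [Group K] (f : ↥A →* K) (g : ↥B →* K),
    (∀ (c : G) (hA : c ∈ A) (hB : c ∈ B), f ⟨c, hA⟩ = g ⟨c, hB⟩) →
    ∃ h : G →* K, (∀ a : ↥A, h a = f a) ∧ (∀ b : ↥B, h b = g b)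

section Words

variable {G : Type u} [Group G]

/-- A word over the alphabet `X`. -/
def IsWordOver (X : Set G) (l : List G) : Prop := ∀ x ∈ l, x ∈ X

/-- A geodesic word over `X`. -/
def IsGeodesicWord (X : Set G) (l : List G) : Prop :=
  IsWordOver X l ∧ l.length = wordLength X l.prod

/-- A `lam`-quasigeodesic word over `X`: every subword `v` satisfies
`l(v) ≤ lam * l_X(v̄) + lam`. -/
def IsQuasigeodesicWord (X : Set G) (lam : ℝ) (l : List G) : Prop :=
  IsWordOver X l ∧
    ∀ v : List G, v <:+: l → (v.length : ℝ) ≤ lam * (wordLength X v.prod : ℝ) + lam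

/-- `g` is a shortest element of the subset `S` with respect to `wordLength X`. -/
def ShortestIn (X : Set G) (g : G) (S : Set G) : Prop :=
  g ∈ S ∧ ∀ s ∈ S, wordLength X g ≤ wordLength X s

end Words

/-- `G` together with `ια, ιβ` is the pushout of `ℤ → A, 1 ↦ x` and `ℤ → B, 1 ↦ y`. -/
structure IsAmalgamOverZ {A : Type u} {B : Type v} {G : Type w}
    [Group A] [Group B] [Group G]
    (ια : A →* G) (ιβ : B →* G) (x : A) (y : B) : Prop where
  comm : ια x = ιβ y
  gen : ια.range ⊔ ιβ.range = ⊤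
  univ : ∀ (K : Type (max u v w)) [Group K] (f : A →* K) (g : B →* K),
    f x = g y → ∃ h : G →* K, h.comp ια = f ∧ h.comp ιβ = g

section WL
variable {K : Type*} [Group K]

lemma wordLength_le_of_word {X : Set K} {l : List K} (hl : ∀ x ∈ l, x ∈ X) :
    wordLength X l.prod ≤ l.length :=
  Nat.sInf_le ⟨l, rfl, hl, rfl⟩

/-- From a symmetric generating set, every element has a word. -/
lemma exists_word_of_symmGen {X : Set K} (hsym : ∀ x ∈ X, x⁻¹ ∈ X)
    (hcl : Subgroup.closure X = ⊤) (g : K) :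
    ∃ l : List K, (∀ x ∈ l, x ∈ X) ∧ l.prod = g := by
  have hg : g ∈ Subgroup.closure X := hcl ▸ Subgroup.mem_top g
  induction hg using Subgroup.closure_induction with
  | mem x hx => exact ⟨[x], by simpa using hx, by simp⟩
  | one => exact ⟨[], by simp, by simp⟩
  | mul x y hx hy ihx ihy =>
      obtain ⟨l1, h1, e1⟩ := ihx
      obtain ⟨l2, h2, e2⟩ := ihy
      refine ⟨l1 ++ l2, ?_, by simp [e1, e2]⟩
      intro z hz
      rcases List.mem_append.1 hz with h | h
      exacts [h1 z h, h2 z h]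
  | inv x hx ihx =>
      obtain ⟨l, h1, e1⟩ := ihx
      refine ⟨(l.map (·⁻¹)).reverse, ?_, ?_⟩
      · intro z hz
        simp only [List.mem_reverse, List.mem_map] at hz
        obtain ⟨a, ha, rfl⟩ := hz
        exact hsym a (h1 a ha)
      · rw [List.prod_reverse_noncomm]
        simp [List.map_map, Function.comp_def, e1]

lemma exists_word_length_eq {X : Set K} (hsym : ∀ x ∈ X, x⁻¹ ∈ X)
    (hcl : Subgroup.closure X = ⊤) (g : K) :
    ∃ l : List K, (∀ x ∈ l, x ∈ X) ∧ l.prod = g ∧ l.length = wordLength X g := by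
  obtain ⟨l, hl, he⟩ := exists_word_of_symmGen hsym hcl g
  have hne : {n : ℕ | ∃ l : List K, l.length = n ∧ (∀ x ∈ l, x ∈ X) ∧ l.prod = g}.Nonempty :=
    ⟨l.length, l, rfl, hl, he⟩
  obtain ⟨l', hlen, hl', he'⟩ := Nat.sInf_mem hne
  exact ⟨l', hl', he', hlen⟩

/-- Concatenating words for each letter. -/
lemma exists_word_of_letter_words {X Y : Set K} {c : ℕ}
    (hXY : ∀ x ∈ X, ∃ l : List K, (∀ y ∈ l, y ∈ Y) ∧ l.prod = x ∧ l.length ≤ c) :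
    ∀ l : List K, (∀ x ∈ l, x ∈ X) →
      ∃ L : List K, (∀ y ∈ L, y ∈ Y) ∧ L.prod = l.prod ∧ L.length ≤ c * l.length := by
  intro l
  induction l with
  | nil => exact fun _ => ⟨[], by simp, by simp, by simp⟩
  | cons x t ih =>
      intro hl
      obtain ⟨lx, h1, h2, h3⟩ := hXY x (hl x (List.mem_cons_self))
      obtain ⟨L, H1, H2, H3⟩ := ih (fun z hz => hl z (List.mem_cons_of_mem _ hz))
      refine ⟨lx ++ L, ?_, by simp [h2, H2], ?_⟩
      · intro y hy
        rcases List.mem_append.1 hy with h | h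
        exacts [h1 y h, H1 y h]
      · simp only [List.length_append, List.length_cons, Nat.mul_succ]
        omega

/-- Change of generators bound. -/
lemma wordLength_le_mul_wordLength {X Y : Set K} {c : ℕ}
    (hsym : ∀ x ∈ X, x⁻¹ ∈ X) (hcl : Subgroup.closure X = ⊤)
    (hXY : ∀ x ∈ X, ∃ l : List K, (∀ y ∈ l, y ∈ Y) ∧ l.prod = x ∧ l.length ≤ c)
    (g : K) : wordLength Y g ≤ c * wordLength X g := by
  obtain ⟨l, hl, he, hlen⟩ := exists_word_length_eq hsym hcl g
  obtain ⟨L, H1, H2, H3⟩ := exists_word_of_letter_words hXY l hl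
  calc wordLength Y g = wordLength Y L.prod := by rw [H2, he]
    _ ≤ L.length := wordLength_le_of_word H1
    _ ≤ c * l.length := H3
    _ = c * wordLength X g := by rw [hlen]

end WL
section BS
variable {G : Type u} [Group G]

def sideSub (G₁ G₂ : Subgroup G) : Bool → Subgroup G := fun b => bif b then G₁ else G₂

abbrev BSV (G₁ G₂ : Subgroup G) : Type u := (G ⧸ G₁) ⊕ (G ⧸ G₂)

def mkV (G₁ G₂ : Subgroup G) : Bool → G → BSV G₁ G₂
  | true, g => .inl (g : G ⧸ G₁)
  | false, g => .inr (g : G ⧸ G₂)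

def bsAdj (G₁ G₂ : Subgroup G) : BSV G₁ G₂ → BSV G₁ G₂ → Prop
  | .inl x, .inr y => ∃ g : G, (g : G ⧸ G₁) = x ∧ (g : G ⧸ G₂) = y
  | .inr y, .inl x => ∃ g : G, (g : G ⧸ G₁) = x ∧ (g : G ⧸ G₂) = y
  | _, _ => False

def BSG (G₁ G₂ : Subgroup G) : SimpleGraph (BSV G₁ G₂) where
  Adj := bsAdj G₁ G₂
  symm := by constructor; rintro (x|x) (y|y) h <;> simp_all [bsAdj]
  loopless := by constructor; rintro (x|x) h <;> exact h

variable {G₁ G₂ : Subgroup G}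

@[simp] lemma mkV_true (g : G) : mkV G₁ G₂ true g = .inl (g : G ⧸ G₁) := rfl
@[simp] lemma mkV_false (g : G) : mkV G₁ G₂ false g = .inr (g : G ⧸ G₂) := rfl

lemma mkV_eq_iff {b c : Bool} {g h : G} :
    mkV G₁ G₂ b g = mkV G₁ G₂ c h ↔ b = c ∧ g⁻¹ * h ∈ sideSub G₁ G₂ b := by
  cases b <;> cases c <;> simp [sideSub, QuotientGroup.eq]

lemma mkV_eq_self {b : Bool} {g h : G} (hm : g⁻¹ * h ∈ sideSub G₁ G₂ b) :
    mkV G₁ G₂ b g = mkV G₁ G₂ b h :=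
  mkV_eq_iff.2 ⟨rfl, hm⟩

lemma adj_mkV {b : Bool} {g g' : G} (hm : g⁻¹ * g' ∈ sideSub G₁ G₂ b) :
    (BSG G₁ G₂).Adj (mkV G₁ G₂ b g) (mkV G₁ G₂ (!b) g') := by
  have hm' : g'⁻¹ * g ∈ sideSub G₁ G₂ b := by
    simpa [mul_inv_rev] using (sideSub G₁ G₂ b).inv_mem hm
  cases b
  · exact ⟨g', rfl, QuotientGroup.eq.2 hm'⟩
  · exact ⟨g', (QuotientGroup.eq.2 hm).symm, rfl⟩

lemma exists_side (u : BSV G₁ G₂) : ∃ b g, u = mkV G₁ G₂ b g := by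
  rcases u with x | x
  · obtain ⟨g, rfl⟩ := QuotientGroup.mk_surjective x
    exact ⟨true, g, rfl⟩
  · obtain ⟨g, rfl⟩ := QuotientGroup.mk_surjective x
    exact ⟨false, g, rfl⟩

lemma adj_elim {u v : BSV G₁ G₂} (h : (BSG G₁ G₂).Adj u v) {b : Bool} {g : G}
    (hu : u = mkV G₁ G₂ b g) :
    ∃ g', v = mkV G₁ G₂ (!b) g' ∧ g⁻¹ * g' ∈ sideSub G₁ G₂ b := by
  subst hu
  cases b
  · rcases v with x | x
    · obtain ⟨g₀, h1, h2⟩ := h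
      refine ⟨g₀, by simp [h1.symm], ?_⟩
      have := QuotientGroup.eq.1 h2
      simpa [sideSub, mul_inv_rev] using G₂.inv_mem this
    · exact absurd h (by simp [BSG, bsAdj, mkV])
  · rcases v with x | x
    · exact absurd h (by simp [BSG, bsAdj, mkV])
    · obtain ⟨g₀, h1, h2⟩ := h
      refine ⟨g₀, by simp [h2.symm], ?_⟩
      have := QuotientGroup.eq.1 h1
      simpa [sideSub, mul_inv_rev] using G₁.inv_mem this

/-- The action of `G` on the Bass–Serre graph. -/
def bsHom (a : G) : BSG G₁ G₂ →g BSG G₁ G₂ where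
  toFun := Sum.map (fun x => a • x) (fun x => a • x)
  map_rel' := by
    rintro (x|x) (y|y) h <;> try exact h.elim
    · obtain ⟨g, h1, h2⟩ := h
      exact ⟨a * g, by simp [← h1, ← h2, MulAction.Quotient.smul_mk]⟩
    · obtain ⟨g, h1, h2⟩ := h
      exact ⟨a * g, by simp [← h1, ← h2, MulAction.Quotient.smul_mk]⟩

lemma bsHom_mkV (a : G) (b : Bool) (g : G) :
    bsHom a (mkV G₁ G₂ b g) = mkV G₁ G₂ b (a * g) := by
  cases b <;> rfl

end BS
section NF
open Monoid
variable {G : Type u} [Group G] {G₁ G₂ C : Subgroup G}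

/-- Strictly alternating words with letters outside `C`. -/
def AltW (G₁ G₂ C : Subgroup G) : Bool → List G → Prop
  | _, [] => True
  | b, x :: t => x ∈ sideSub G₁ G₂ b ∧ x ∉ C ∧ AltW G₁ G₂ C (!b) t

/-- The normal form theorem: a nonempty strictly alternating word has product outside `C`. -/
theorem AltW.prod_not_mem (amal : IsAmalgamatedFreeProduct G₁ G₂ C)
    {b : Bool} {l : List G} (hl : AltW G₁ G₂ C b l) (hne : l ≠ []) :
    l.prod ∉ C := by
  classical
  -- set up the pushout
  let Gf : Bool → Type u := fun i => ↥(sideSub G₁ G₂ i)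
  let φ : ∀ i, ↥C →* Gf i := fun i =>
    Subgroup.inclusion (by cases i; exacts [amal.le_right, amal.le_left])
  have hφinj : ∀ i, Function.Injective (φ i) := fun i =>
    Subgroup.inclusion_injective _
  let K := PushoutI φ
  have compat : ∀ (c : G) (hA : c ∈ G₁) (hB : c ∈ G₂),
      (PushoutI.of (φ := φ) true) ⟨c, hA⟩ = (PushoutI.of (φ := φ) false) ⟨c, hB⟩ := by
    intro c hA hB
    have hc : c ∈ C := by rw [← amal.inf_eq]; exact ⟨hA, hB⟩
    have h1 : (⟨c, hA⟩ : ↥G₁) = φ true ⟨c, hc⟩ := rfl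
    have h2 : (⟨c, hB⟩ : ↥G₂) = φ false ⟨c, hc⟩ := rfl
    exact (PushoutI.of_apply_eq_base φ true ⟨c, hc⟩).trans
      (PushoutI.of_apply_eq_base φ false ⟨c, hc⟩).symm
  obtain ⟨ψ, hψ₁, hψ₂⟩ := amal.univ K (PushoutI.of (φ := φ) true)
    (PushoutI.of (φ := φ) false) compat
  -- the letters map to `of`
  have hψof : ∀ (b : Bool) (x : G) (hx : x ∈ sideSub G₁ G₂ b),
      ψ x = PushoutI.of (φ := φ) b ⟨x, hx⟩ := by
    intro b x hx
    cases b
    · exact hψ₂ ⟨x, hx⟩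
    · exact hψ₁ ⟨x, hx⟩
  -- build reduced words by induction
  have key : ∀ (l : List G) (b : Bool), AltW G₁ G₂ C b l →
      ∃ w : CoprodI.Word Gf,
        PushoutI.ofCoprodI (φ := φ) w.prod = ψ l.prod ∧
        PushoutI.Reduced φ w ∧
        w.fstIdx ≠ some (!b) ∧ (l ≠ [] → w.fstIdx = some b) := by
    intro l
    induction l with
    | nil =>
        intro b _
        refine ⟨CoprodI.Word.empty, by simp, ?_, ?_, by simp⟩
        · intro g hg; simp [CoprodI.Word.empty] at hg
        · simp [CoprodI.Word.fstIdx, CoprodI.Word.empty]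
    | cons x t ih =>
        rintro b ⟨hxb, hxC, ht⟩
        obtain ⟨wt, hwt1, hwt2, hwt3, _⟩ := ih (!b) ht
        have hne' : wt.fstIdx ≠ some b := by simpa using hwt3
        have hm1 : (⟨x, hxb⟩ : Gf b) ≠ 1 := by
          intro hx1
          apply hxC
          have : x = 1 := congrArg Subtype.val hx1
          exact this ▸ C.one_mem
        refine ⟨CoprodI.Word.cons ⟨x, hxb⟩ wt hne' hm1, ?_, ?_, ?_, ?_⟩
        · rw [CoprodI.Word.prod_cons, map_mul, PushoutI.ofCoprodI_of, hwt1,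
            List.prod_cons, map_mul, hψof b x hxb]
        · intro g hg
          simp only [CoprodI.Word.cons, List.mem_cons] at hg
          rcases hg with rfl | hg
          · rintro ⟨y, hy⟩
            apply hxC
            have : x = (y : G) := (congrArg Subtype.val hy).symm
            rw [this]; exact y.2
          · exact hwt2 g hg
        · rw [CoprodI.Word.fstIdx_cons]
          simp
        · intro _; rw [CoprodI.Word.fstIdx_cons]
  intro hp
  obtain ⟨w, hw1, hw2, _, hw4⟩ := key l b hl
  have hbase : ψ l.prod ∈ (PushoutI.base φ).range := by
    have h1 : l.prod = ((⟨l.prod, amal.le_left hp⟩ : ↥G₁) : G) := rfl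
    rw [h1, hψ₁ ⟨l.prod, amal.le_left hp⟩]
    have : (⟨l.prod, amal.le_left hp⟩ : ↥G₁) = φ true ⟨l.prod, hp⟩ := rfl
    rw [this]
    exact ⟨⟨l.prod, hp⟩, (PushoutI.of_apply_eq_base φ true ⟨l.prod, hp⟩).symm⟩
  have hempty := PushoutI.Reduced.eq_empty_of_mem_range hφinj hw2 (hw1 ▸ hbase)
  have := hw4 hne
  rw [hempty] at this
  simp [CoprodI.Word.fstIdx, CoprodI.Word.empty] at this
end NF
section EX
variable {G : Type u} [Group G] {G₁ G₂ C : Subgroup G}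

/-- No two entries at distance two in the list are equal. -/
def TwoApart {α : Type u_1} : List α → Prop
  | a :: b :: c :: t => a ≠ c ∧ TwoApart (b :: c :: t)
  | _ => True

lemma TwoApart.tail {α : Type u_1} {a : α} {l : List α} (h : TwoApart (a :: l)) :
    TwoApart l := by
  match l with
  | [] => trivial
  | [b] => trivial
  | b :: c :: t => exact h.2

lemma twoApart_of_nodup {α : Type u_1} {l : List α} (h : l.Nodup) : TwoApart l := by
  match l with
  | [] => trivial
  | [a] => trivial
  | [a, b] => trivial
  | a :: b :: c :: t =>
      refine ⟨?_, twoApart_of_nodup h.of_cons⟩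
      exact fun hac => (List.nodup_cons.1 h).1 (by simp [hac])

lemma twoApart_head_third {α : Type u_1} {l : List α} (h : TwoApart l) {a c : α}
    (h0 : l[0]? = some a) (h2 : l[2]? = some c) : a ≠ c := by
  match l with
  | [] => simp at h0
  | [x] => simp at h2
  | [x, y] => simp at h2
  | x :: y :: z :: t =>
      simp only [List.getElem?_cons_succ, List.getElem?_cons_zero,
        Option.some.injEq] at h0 h2
      subst h0; subst h2; exact h.1

lemma twoApart_cons {α : Type u_1} {a : α} {l : List α}
    (h1 : ∀ c, l[1]? = some c → a ≠ c) (h : TwoApart l) : TwoApart (a :: l) := by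
  match l with
  | [] => trivial
  | [b] => trivial
  | b :: c :: t => exact ⟨h1 c (by simp), h⟩

/-- Alternating word whose first letter is allowed to lie in `C`. -/
def AltLoose (G₁ G₂ C : Subgroup G) : Bool → List G → Prop
  | _, [] => True
  | b, x :: t => x ∈ sideSub G₁ G₂ b ∧ AltW G₁ G₂ C (!b) t

def altEnd (b : Bool) (n : ℕ) : Bool := if n % 2 = 0 then b else !b

lemma walk_extract (hCl : C ≤ G₁) (hCr : C ≤ G₂) {u v : BSV G₁ G₂}
    (p : (BSG G₁ G₂).Walk u v) :
    TwoApart p.support → ∀ (b : Bool) (g : G), u = mkV G₁ G₂ b g →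
    ∃ (h : G) (l : List G),
      v = mkV G₁ G₂ (altEnd b l.length) h ∧
      g * l.prod = h ∧ AltLoose G₁ G₂ C b l ∧ l.length = p.length ∧
      (∀ x t', l = x :: t' → p.support[1]? = some (mkV G₁ G₂ (!b) (g * x))) := by
  induction p with
  | nil =>
      intro _ b g hu
      exact ⟨g, [], by simpa [altEnd] using hu, by simp, trivial, by simp, by simp⟩
  | @cons u u₁ v adj p' ih =>
      intro hTA b g hu
      obtain ⟨g₁, hu₁, hx₁⟩ := adj_elim adj hu
      have hTA' : TwoApart p'.support := by
        rw [SimpleGraph.Walk.support_cons] at hTA; exact hTA.tail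
      obtain ⟨h, l', hv, hprod, halt, hlen, hhead⟩ := ih hTA' (!b) g₁ hu₁
      set x₁ : G := g⁻¹ * g₁ with hx₁def
      have hgx₁ : g * x₁ = g₁ := by rw [hx₁def, mul_inv_cancel_left]
      have haltW : AltW G₁ G₂ C (!b) l' := by
        match l' with
        | [] => trivial
        | x₂ :: t' =>
            obtain ⟨hx₂side, ht'⟩ := halt
            refine ⟨hx₂side, ?_, by simpa using ht'⟩
            -- x₂ ∉ C, else u = third vertex of p, contradicting TwoApart
            intro hx₂C
            have h2 : (SimpleGraph.Walk.cons adj p').support[2]? =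
                some (mkV G₁ G₂ (!!b) (g₁ * x₂)) := by
              rw [SimpleGraph.Walk.support_cons]
              simpa using hhead x₂ t' rfl
            have h0 : (SimpleGraph.Walk.cons adj p').support[0]? = some (mkV G₁ G₂ b g) := by
              rw [SimpleGraph.Walk.support_cons, hu]; simp
            have hne := twoApart_head_third hTA h0 h2
            apply hne
            rw [Bool.not_not]
            refine mkV_eq_self ?_
            have hx₂side' : x₂ ∈ sideSub G₁ G₂ b := by
              cases b
              · exact hCr hx₂C
              · exact hCl hx₂C
            have : g⁻¹ * (g₁ * x₂) = x₁ * x₂ := by rw [hx₁def, mul_assoc]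
            rw [this]
            exact (sideSub G₁ G₂ b).mul_mem hx₁ hx₂side'
      refine ⟨h, x₁ :: l', ?_, ?_, ⟨hx₁, haltW⟩, by simpa using hlen, ?_⟩
      · have : altEnd b (x₁ :: l').length = altEnd (!b) l'.length := by
          simp only [List.length_cons, altEnd]
          rcases Nat.even_or_odd l'.length with he | ho
          · have h1 : l'.length % 2 = 0 := Nat.even_iff.1 he
            have h2 : (l'.length + 1) % 2 = 1 := by omega
            simp [h1, h2]
          · have h1 : l'.length % 2 = 1 := Nat.odd_iff.1 ho
            have h2 : (l'.length + 1) % 2 = 0 := by omega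
            simp [h1, h2]
        rw [this]; exact hv
      · rw [List.prod_cons, ← mul_assoc, hgx₁]; exact hprod
      · intro x t' hxt
        injection hxt with he1 he2
        subst he1; subst he2
        have h0 : p'.support[0]? = some u₁ := by
          rw [SimpleGraph.Walk.support_eq_cons]; simp
        rw [SimpleGraph.Walk.support_cons, List.getElem?_cons_succ, h0, hu₁, hgx₁]
end EX
section ACYC
variable {G : Type u} [Group G] {G₁ G₂ C : Subgroup G}

def vSide : BSV G₁ G₂ → Bool := Sum.elim (fun _ => true) (fun _ => false)

@[simp] lemma vSide_mkV (b : Bool) (g : G) : vSide (mkV G₁ G₂ b g) = b := by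
  cases b <;> rfl

lemma adj_vSide {u v : BSV G₁ G₂} (h : (BSG G₁ G₂).Adj u v) : vSide v = !vSide u := by
  obtain ⟨b, g, rfl⟩ := exists_side u
  obtain ⟨g', rfl, -⟩ := adj_elim h rfl
  simp

lemma walk_parity {u v : BSV G₁ G₂} (p : (BSG G₁ G₂).Walk u v) :
    (vSide u = vSide v) ↔ Even p.length := by
  induction p with
  | nil => simp
  | @cons u u₁ v adj p' ih =>
      have hs := adj_vSide adj
      rw [SimpleGraph.Walk.length_cons, Nat.even_add_one, ← ih, hs]
      cases vSide u <;> cases vSide v <;> simp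

lemma altEnd_succ (b : Bool) (n : ℕ) : altEnd b (n + 1) = altEnd (!b) n := by
  rcases Nat.even_or_odd n with he | ho
  · have h1 := Nat.even_iff.1 he
    have h2 : (n + 1) % 2 = 1 := by omega
    simp [altEnd, h1, h2]
  · have h1 := Nat.odd_iff.1 ho
    have h2 : (n + 1) % 2 = 0 := by omega
    simp [altEnd, h1, h2]

lemma AltW.snoc {b : Bool} {l : List G} (h : AltW G₁ G₂ C b l) {x : G}
    (hx : x ∈ sideSub G₁ G₂ (altEnd b l.length)) (hxC : x ∉ C) :
    AltW G₁ G₂ C b (l ++ [x]) := by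
  induction l generalizing b with
  | nil => exact ⟨by simpa [altEnd] using hx, hxC, trivial⟩
  | cons y t ih =>
      obtain ⟨hy, hyC, ht⟩ := h
      refine ⟨hy, hyC, ih ht ?_⟩
      rwa [← altEnd_succ]

theorem bsg_isAcyclic (amal : IsAmalgamatedFreeProduct G₁ G₂ C) :
    (BSG G₁ G₂).IsAcyclic := by
  intro v c hc
  classical
  obtain ⟨b, g, hv⟩ := exists_side v
  have h3 : 3 ≤ c.length := hc.three_le_length
  have heven : Even c.length := (walk_parity c).1 rfl
  -- two-apart property of the cycle support
  have htlen : c.support.tail.length = c.length := by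
    have := SimpleGraph.Walk.length_support c
    have h2 : c.support.length = c.support.tail.length + 1 := by
      rw [SimpleGraph.Walk.support_eq_cons]; simp
    omega
  have hTA : TwoApart c.support := by
    rw [SimpleGraph.Walk.support_eq_cons]
    refine twoApart_cons ?_ (twoApart_of_nodup hc.support_nodup)
    intro cc h1 hvc
    have hlast : c.support.getLast? = some v := by
      rw [List.getLast?_eq_getLast (by simp), SimpleGraph.Walk.getLast_support]
    rcases ht : c.support.tail with _ | ⟨a, tl⟩
    · rw [ht] at htlen; simp at htlen; omega
    rcases tl with _ | ⟨bb, rest⟩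
    · rw [ht] at htlen; simp at htlen; omega
    rcases rest with _ | ⟨d, rest'⟩
    · rw [ht] at htlen; simp at htlen; omega
    rw [ht] at h1
    simp only [List.getElem?_cons_succ, List.getElem?_cons_zero, Option.some.injEq] at h1
    -- bb = cc = v
    have hvbb : bb = v := by rw [h1, hvc]
    have hsupp : c.support = v :: a :: bb :: d :: rest' := by
      rw [SimpleGraph.Walk.support_eq_cons, ht]
    rw [hsupp] at hlast
    rw [List.getLast?_cons_cons, List.getLast?_cons_cons, List.getLast?_cons_cons] at hlast
    have hvmem : v ∈ d :: rest' := by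
      obtain ⟨hne0, heq0⟩ := List.mem_getLast?_eq_getLast (l := d :: rest') (x := v) hlast
      rw [heq0]; exact List.getLast_mem hne0
    have hnd : (bb :: d :: rest').Nodup := by
      have := hc.support_nodup
      rw [ht] at this
      exact this.of_cons
    exact (List.nodup_cons.1 hnd).1 (hvbb ▸ hvmem)
  -- extract the alternating word
  obtain ⟨h, l, hv2, hprod, hloose, hlen, -⟩ :=
    walk_extract (C := C) amal.le_left amal.le_right c hTA b g hv
  rcases l with _ | ⟨x₁, rest⟩
  · simp at hlen; omega
  have hlenn : rest.length + 1 = c.length := by simpa using hlen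
  have hend : altEnd b (x₁ :: rest).length = b := by
    have h0 : (x₁ :: rest).length % 2 = 0 := by
      rw [hlen]; exact Nat.even_iff.1 heven
    simp only [List.length_cons] at h0
    simp [altEnd, h0]
  rw [hend] at hv2
  obtain ⟨hx₁side, hAltRest⟩ := hloose
  have hs0 : g⁻¹ * h ∈ sideSub G₁ G₂ b := (mkV_eq_iff.1 (hv ▸ hv2)).2
  have hlprod : (x₁ :: rest).prod = g⁻¹ * h := by
    rw [← hprod]; group
  have hrest : rest.prod ∈ sideSub G₁ G₂ b := by
    have : rest.prod = x₁⁻¹ * (g⁻¹ * h) := by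
      rw [← hlprod, List.prod_cons]; group
    rw [this]
    exact (sideSub G₁ G₂ b).mul_mem ((sideSub G₁ G₂ b).inv_mem hx₁side) hs0
  have hrestne : rest ≠ [] := by
    intro hre; rw [hre] at hlenn; simp at hlenn; omega
  by_cases hC : rest.prod ∈ C
  · exact AltW.prod_not_mem amal hAltRest hrestne hC
  · have hodd : rest.length % 2 = 1 := by
      have := Nat.even_iff.1 heven; omega
    have hendr : altEnd (!b) rest.length = b := by simp [altEnd, hodd]
    have hsnoc : AltW G₁ G₂ C (!b) (rest ++ [rest.prod⁻¹]) :=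
      hAltRest.snoc (by rw [hendr]; exact (sideSub G₁ G₂ b).inv_mem hrest)
        (fun hmem => hC (by simpa using C.inv_mem hmem))
    have : (rest ++ [rest.prod⁻¹]).prod ∈ C := by simp [C.one_mem]
    exact AltW.prod_not_mem amal hsnoc (by simp) this
end ACYC
section DEC
variable {G : Type u} [Group G] {G₁ G₂ C : Subgroup G}

lemma bsHom_one_apply (u : BSV G₁ G₂) : bsHom (1 : G) u = u := by
  obtain ⟨b, g, rfl⟩ := exists_side u
  rw [bsHom_mkV, one_mul]

lemma bsHom_mul_apply (a b : G) (u : BSV G₁ G₂) :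
    bsHom (a * b) u = bsHom a (bsHom b u) := by
  obtain ⟨c, g, rfl⟩ := exists_side u
  rw [bsHom_mkV, bsHom_mkV, bsHom_mkV, mul_assoc]

lemma bsHom_cancel {a : G} {u w : BSV G₁ G₂} (h : bsHom a u = w) :
    bsHom a⁻¹ w = u := by
  rw [← h, ← bsHom_mul_apply, inv_mul_cancel, bsHom_one_apply]

/-- All darts of the walk are `H`-translates of pairs from `Q`. -/
def EdgeCtl (H : Subgroup G) (Q : Set (BSV G₁ G₂)) {u v : BSV G₁ G₂}
    (w : (BSG G₁ G₂).Walk u v) : Prop :=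
  ∀ d ∈ w.darts, ∃ a ∈ H, ∃ q ∈ Q, ∃ q' ∈ Q,
    (d : (BSG G₁ G₂).Dart).toProd.1 = bsHom a q ∧ d.toProd.2 = bsHom a q'

/-- Elements of `H` carrying some vertex of `Q` into `Q`. -/
def Fset (H : Subgroup G) (Q : Set (BSV G₁ G₂)) : Set G :=
  {g | g ∈ H ∧ ∃ q ∈ Q, ∃ q' ∈ Q, bsHom g q = q'}

lemma Fset_subset (H : Subgroup G) (Q : Set (BSV G₁ G₂)) :
    ∀ g ∈ Fset H Q, g ∈ H := fun _ hg => hg.1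

lemma Fset_inv (H : Subgroup G) (Q : Set (BSV G₁ G₂)) :
    ∀ g ∈ Fset H Q, g⁻¹ ∈ Fset H Q := by
  rintro g ⟨hgH, q, hq, q', hq', hmap⟩
  exact ⟨H.inv_mem hgH, q', hq', q, hq, bsHom_cancel hmap⟩

lemma Fset_finite {H : Subgroup G} {Q : Set (BSV G₁ G₂)} (hQ : Q.Finite)
    (hfree : ∀ g ∈ H, ∀ u : BSV G₁ G₂, bsHom g u = u → g = 1) :
    (Fset H Q).Finite := by
  have hsub : Fset H Q ⊆ ⋃ q ∈ Q, ⋃ q' ∈ Q, {g : G | g ∈ H ∧ bsHom g q = q'} := by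
    rintro g ⟨hgH, q, hq, q', hq', hmap⟩
    exact Set.mem_biUnion hq (Set.mem_biUnion hq' ⟨hgH, hmap⟩)
  refine Set.Finite.subset ?_ hsub
  refine hQ.biUnion fun q _ => hQ.biUnion fun q' _ => ?_
  refine Set.Subsingleton.finite ?_
  rintro g₁ ⟨h₁, e₁⟩ g₂ ⟨h₂, e₂⟩
  have : bsHom (g₂⁻¹ * g₁) q = q := by
    rw [bsHom_mul_apply, e₁, bsHom_cancel e₂]
  have h1 := hfree _ (H.mul_mem (H.inv_mem h₂) h₁) q this
  exact (inv_mul_eq_one.1 h1).symm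

lemma decomp {H : Subgroup G} {Q : Set (BSV G₁ G₂)} :
    ∀ {u v : BSV G₁ G₂} (p : (BSG G₁ G₂).Walk u v), EdgeCtl H Q p →
    ∀ a ∈ H, ∀ q ∈ Q, u = bsHom a q → ∀ b ∈ H, ∀ q' ∈ Q, v = bsHom b q' →
    ∃ lst : List G, (∀ f ∈ lst, f ∈ Fset H Q) ∧ lst.prod = a⁻¹ * b ∧
      lst.length ≤ p.length + 1 := by
  intro u v p
  induction p with
  | nil =>
      intro _ a haH q hq hu b hbH q' hq' hv
      refine ⟨[a⁻¹ * b], ?_, by simp, by simp⟩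
      intro f hf
      simp only [List.mem_singleton] at hf
      subst hf
      have e1 : bsHom (b⁻¹ * a) q = q' := by
        rw [bsHom_mul_apply, ← hu]
        exact bsHom_cancel hv.symm
      have memF : b⁻¹ * a ∈ Fset H Q :=
        ⟨H.mul_mem (H.inv_mem hbH) haH, q, hq, q', hq', e1⟩
      simpa [mul_inv_rev] using Fset_inv H Q _ memF
  | @cons u u₁ v adj p' ih =>
      intro hE a haH q hq hu b hbH q' hq' hv
      obtain ⟨a₀, haH₀, q₀, hq₀, q₀', hq₀', e1, e2⟩ :=
        hE ⟨(u, u₁), adj⟩ (by rw [SimpleGraph.Walk.darts_cons]; exact List.mem_cons_self)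
      simp only at e1 e2
      have e1' : bsHom (a₀⁻¹ * a) q = q₀ := by
        rw [bsHom_mul_apply, ← hu]
        exact bsHom_cancel e1.symm
      have memF : a₀⁻¹ * a ∈ Fset H Q :=
        ⟨H.mul_mem (H.inv_mem haH₀) haH, q, hq, q₀, hq₀, e1'⟩
      have memF' : a⁻¹ * a₀ ∈ Fset H Q := by
        simpa [mul_inv_rev] using Fset_inv H Q _ memF
      obtain ⟨lst', hmem', hprod', hlen'⟩ :=
        ih (fun d hd => hE d (by rw [SimpleGraph.Walk.darts_cons]; exact List.mem_cons_of_mem _ hd))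
          a₀ haH₀ q₀' hq₀' e2 b hbH q' hq' hv
      refine ⟨(a⁻¹ * a₀) :: lst', ?_, ?_, ?_⟩
      · intro f hf
        rcases List.mem_cons.1 hf with rfl | hf
        exacts [memF', hmem' f hf]
      · rw [List.prod_cons, hprod']; group
      · simp only [List.length_cons, SimpleGraph.Walk.length_cons]
        omega
end DEC
section WALKS
variable {G : Type u} [Group G] {G₁ G₂ C : Subgroup G} {H : Subgroup G}
  {Q : Set (BSV G₁ G₂)}

lemma edgectl_of_darts_subset {u v u' v' : BSV G₁ G₂} {p : (BSG G₁ G₂).Walk u v}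
    {p' : (BSG G₁ G₂).Walk u' v'} (hsub : p.darts ⊆ p'.darts)
    (h : EdgeCtl H Q p') : EdgeCtl H Q p := fun d hd => h d (hsub hd)

lemma edgectl_append {u v w : BSV G₁ G₂} {p : (BSG G₁ G₂).Walk u v}
    {p' : (BSG G₁ G₂).Walk v w} (h1 : EdgeCtl H Q p) (h2 : EdgeCtl H Q p') :
    EdgeCtl H Q (p.append p') := by
  intro d hd
  rw [SimpleGraph.Walk.darts_append, List.mem_append] at hd
  rcases hd with hd | hd
  exacts [h1 d hd, h2 d hd]

lemma edgectl_map {a : G} (haH : a ∈ H) {u v : BSV G₁ G₂} {p : (BSG G₁ G₂).Walk u v}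
    (h : EdgeCtl H Q p) : EdgeCtl H Q (p.map (bsHom a)) := by
  intro d hd
  rw [SimpleGraph.Walk.darts_map, List.mem_map] at hd
  obtain ⟨d', hd', rfl⟩ := hd
  obtain ⟨a', ha'H, q, hq, q', hq', e1, e2⟩ := h d' hd'
  refine ⟨a * a', H.mul_mem haH ha'H, q, hq, q', hq', ?_, ?_⟩
  · show bsHom a d'.toProd.1 = _
    rw [e1, bsHom_mul_apply]
  · show bsHom a d'.toProd.2 = _
    rw [e2, bsHom_mul_apply]

lemma edgectl_reverse {u v : BSV G₁ G₂} {p : (BSG G₁ G₂).Walk u v}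
    (h : EdgeCtl H Q p) : EdgeCtl H Q p.reverse := by
  intro d hd
  rw [SimpleGraph.Walk.darts_reverse, List.mem_reverse, List.mem_map] at hd
  obtain ⟨d', hd', rfl⟩ := hd
  obtain ⟨a', ha'H, q, hq, q', hq', e1, e2⟩ := h d' hd'
  refine ⟨a', ha'H, q', hq', q, hq, ?_, ?_⟩
  · rw [SimpleGraph.Dart.symm_toProd]; exact e2
  · rw [SimpleGraph.Dart.symm_toProd]; exact e1

lemma edgectl_copy {u v u' v' : BSV G₁ G₂} {p : (BSG G₁ G₂).Walk u v}
    (hu : u = u') (hv : v = v') (h : EdgeCtl H Q p) : EdgeCtl H Q (p.copy hu hv) := by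
  intro d hd
  rw [SimpleGraph.Walk.darts_copy] at hd
  exact h d hd

lemma exists_walk_word (l : List G) (hl : ∀ x ∈ l, x ∈ ((G₁ : Set G) ∪ (G₂ : Set G))) :
    ∃ w : (BSG G₁ G₂).Walk (mkV G₁ G₂ true 1) (mkV G₁ G₂ true l.prod),
      w.length ≤ 2 * l.length := by
  induction l with
  | nil => exact ⟨SimpleGraph.Walk.nil, by simp⟩
  | cons x t ih =>
      obtain ⟨w', hw'⟩ := ih (fun z hz => hl z (List.mem_cons_of_mem _ hz))
      have hpc : (x :: t).prod = x * t.prod := List.prod_cons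
      rcases hl x (List.mem_cons_self) with hx1 | hx2
      · have h0 : mkV G₁ G₂ true 1 = mkV G₁ G₂ true x :=
          mkV_eq_self (by simpa [sideSub] using hx1)
        refine ⟨((w'.map (bsHom x)).copy (by rw [bsHom_mkV, mul_one])
          (by rw [bsHom_mkV])).copy h0.symm (by rw [hpc]), ?_⟩
        rw [SimpleGraph.Walk.length_copy, SimpleGraph.Walk.length_copy,
          SimpleGraph.Walk.length_map]
        simp only [List.length_cons]
        omega
      · have h0 : mkV G₁ G₂ false 1 = mkV G₁ G₂ false x :=
          mkV_eq_self (by simpa [sideSub] using hx2)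
        have a1 : (BSG G₁ G₂).Adj (mkV G₁ G₂ true 1) (mkV G₁ G₂ false x) :=
          h0 ▸ adj_mkV (by simpa [sideSub] using G₁.one_mem)
        have a2 : (BSG G₁ G₂).Adj (mkV G₁ G₂ false x) (mkV G₁ G₂ true x) := by
          refine adj_mkV ?_
          simpa [sideSub] using G₂.one_mem
        refine ⟨(SimpleGraph.Walk.cons a1 (SimpleGraph.Walk.cons a2
          ((w'.map (bsHom x)).copy (by rw [bsHom_mkV, mul_one])
            (by rw [bsHom_mkV])))).copy rfl (by rw [hpc]), ?_⟩
        rw [SimpleGraph.Walk.length_copy]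
        simp only [SimpleGraph.Walk.length_cons, SimpleGraph.Walk.length_copy,
          SimpleGraph.Walk.length_map, List.length_cons]
        omega

lemma free_action
    (htriv : ∀ g : G,
      H.map (MulAut.conj g⁻¹).toMonoidHom ⊓ G₁ = ⊥ ∧
      H.map (MulAut.conj g⁻¹).toMonoidHom ⊓ G₂ = ⊥) :
    ∀ g ∈ H, ∀ u : BSV G₁ G₂, bsHom g u = u → g = 1 := by
  intro g hg u hfix
  obtain ⟨b, x, rfl⟩ := exists_side u
  rw [bsHom_mkV] at hfix
  have hk : (g * x)⁻¹ * x ∈ sideSub G₁ G₂ b := (mkV_eq_iff.1 hfix).2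
  have hk' : x⁻¹ * g⁻¹ * x ∈ sideSub G₁ G₂ b := by
    have : (g * x)⁻¹ * x = x⁻¹ * g⁻¹ * x := by group
    rwa [this] at hk
  have hmap : x⁻¹ * g⁻¹ * x ∈ H.map (MulAut.conj x⁻¹).toMonoidHom := by
    refine ⟨g⁻¹, H.inv_mem hg, ?_⟩
    simp [MulAut.conj_apply, mul_assoc]
  have hone : x⁻¹ * g⁻¹ * x = 1 := by
    cases b
    · have := (htriv x).2
      have hmem : x⁻¹ * g⁻¹ * x ∈ H.map (MulAut.conj x⁻¹).toMonoidHom ⊓ G₂ :=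
        ⟨hmap, by simpa [sideSub] using hk'⟩
      rw [this] at hmem
      exact Subgroup.mem_bot.1 hmem
    · have := (htriv x).1
      have hmem : x⁻¹ * g⁻¹ * x ∈ H.map (MulAut.conj x⁻¹).toMonoidHom ⊓ G₁ :=
        ⟨hmap, by simpa [sideSub] using hk'⟩
      rw [this] at hmem
      exact Subgroup.mem_bot.1 hmem
  have : g⁻¹ = 1 := by
    have h2 : g⁻¹ = x * (x⁻¹ * g⁻¹ * x) * x⁻¹ := by group
    rw [h2, hone]; group
  simpa using congrArg (·⁻¹) this

end WALKS
section MASTER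
variable {G : Type u} [Group G] {G₁ G₂ C : Subgroup G} {H : Subgroup G}

theorem exists_good_gen (amal : IsAmalgamatedFreeProduct G₁ G₂ C) (hH : H.FG)
    (htriv : ∀ g : G,
      H.map (MulAut.conj g⁻¹).toMonoidHom ⊓ G₁ = ⊥ ∧
      H.map (MulAut.conj g⁻¹).toMonoidHom ⊓ G₂ = ⊥) :
    ∃ F : Set G, F.Finite ∧ (∀ g ∈ F, g ∈ H) ∧ (∀ g ∈ F, g⁻¹ ∈ F) ∧
      ∀ h ∈ H, ∃ lst : List G, (∀ f ∈ lst, f ∈ F) ∧ lst.prod = h ∧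
        lst.length ≤ 2 * wordLength ((G₁ : Set G) ∪ (G₂ : Set G)) h + 2 := by
  classical
  have hsup : Subgroup.closure ((G₁ : Set G) ∪ (G₂ : Set G)) = ⊤ := by
    rw [Subgroup.closure_union, Subgroup.closure_eq, Subgroup.closure_eq, amal.sup_eq_top]
  have hsym : ∀ x ∈ ((G₁ : Set G) ∪ (G₂ : Set G)), x⁻¹ ∈ ((G₁ : Set G) ∪ (G₂ : Set G)) := by
    rintro x (hx | hx)
    · exact Or.inl (G₁.inv_mem hx)
    · exact Or.inr (G₂.inv_mem hx)
  have hex : ∀ g : G, ∃ _ : (BSG G₁ G₂).Walk (mkV G₁ G₂ true 1) (mkV G₁ G₂ true g), True := by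
    intro g
    obtain ⟨l, hl, hp⟩ := exists_word_of_symmGen hsym hsup g
    obtain ⟨w, -⟩ := exists_walk_word l hl
    exact ⟨w.copy rfl (by rw [hp]), trivial⟩
  choose W _ using hex
  obtain ⟨T, hT⟩ := hH
  let v₀ : BSV G₁ G₂ := mkV G₁ G₂ true 1
  let Q : Set (BSV G₁ G₂) := {v₀} ∪ ⋃ s ∈ (T : Set G), {x | x ∈ (W s).support}
  have hQfin : Q.Finite := (Set.finite_singleton _).union
    (T.finite_toSet.biUnion fun s _ => (W s).support.finite_toSet)
  have hQv₀ : v₀ ∈ Q := Or.inl rfl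
  have hfree := free_action (G₁ := G₁) (G₂ := G₂) htriv
  have hwalks : ∀ h ∈ H, ∃ w : (BSG G₁ G₂).Walk v₀ (mkV G₁ G₂ true h), EdgeCtl H Q w := by
    intro h hh
    rw [← hT] at hh
    induction hh using Subgroup.closure_induction with
    | mem s hs =>
        refine ⟨W s, fun d hd => ⟨1, H.one_mem, d.toProd.1, ?_, d.toProd.2, ?_,
          (bsHom_one_apply _).symm, (bsHom_one_apply _).symm⟩⟩
        · exact Or.inr (Set.mem_biUnion hs
            (SimpleGraph.Walk.dart_fst_mem_support_of_mem_darts _ hd))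
        · exact Or.inr (Set.mem_biUnion hs
            (SimpleGraph.Walk.dart_snd_mem_support_of_mem_darts _ hd))
    | one =>
        refine ⟨SimpleGraph.Walk.nil, fun d hd => by rw [SimpleGraph.Walk.darts_nil] at hd; cases hd⟩
    | mul a b ha hb iha ihb =>
        obtain ⟨wa, ca⟩ := iha
        obtain ⟨wb, cb⟩ := ihb
        have haH : a ∈ H := hT ▸ ha
        refine ⟨wa.append ((wb.map (bsHom a)).copy (by rw [bsHom_mkV, mul_one])
          (by rw [bsHom_mkV])), ?_⟩
        exact edgectl_append ca (edgectl_copy _ _ (edgectl_map haH cb))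
    | inv a ha iha =>
        obtain ⟨wa, ca⟩ := iha
        have haH : a⁻¹ ∈ H := H.inv_mem (hT ▸ ha)
        refine ⟨((wa.map (bsHom a⁻¹)).copy (by rw [bsHom_mkV, mul_one])
          (by rw [bsHom_mkV, inv_mul_cancel])).reverse, ?_⟩
        exact edgectl_reverse (edgectl_copy _ _ (edgectl_map haH ca))
  refine ⟨Fset H Q, Fset_finite hQfin hfree, Fset_subset H Q, Fset_inv H Q, ?_⟩
  intro h hh
  obtain ⟨w₂, hctl⟩ := hwalks h hh
  have hctlγ : EdgeCtl H Q w₂.bypass :=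
    edgectl_of_darts_subset (SimpleGraph.Walk.darts_bypass_subset w₂) hctl
  obtain ⟨l, hl, hp, hlen⟩ := exists_word_length_eq hsym hsup h
  obtain ⟨w₁, hw₁len⟩ := exists_walk_word l hl
  have hγlen : w₂.bypass.length ≤ 2 * wordLength ((G₁ : Set G) ∪ (G₂ : Set G)) h := by
    have hPeq := (bsg_isAcyclic amal).path_unique
      (⟨w₂.bypass, w₂.bypass_isPath⟩ : (BSG G₁ G₂).Path v₀ (mkV G₁ G₂ true h))
      ⟨(w₁.copy rfl (by rw [hp])).bypass, SimpleGraph.Walk.bypass_isPath _⟩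
    have : w₂.bypass.length = (w₁.copy rfl (by rw [hp] : mkV G₁ G₂ true l.prod
        = mkV G₁ G₂ true h)).bypass.length := by
      rw [congrArg (fun p => SimpleGraph.Walk.length p.val) hPeq]
    rw [this]
    calc ((w₁.copy rfl _).bypass).length ≤ (w₁.copy rfl _).length :=
          SimpleGraph.Walk.length_bypass_le _
      _ = w₁.length := SimpleGraph.Walk.length_copy _ _ _
      _ ≤ 2 * l.length := hw₁len
      _ = 2 * wordLength ((G₁ : Set G) ∪ (G₂ : Set G)) h := by rw [hlen]
  obtain ⟨lst, hmem, hprod, hln⟩ := decomp w₂.bypass hctlγ 1 H.one_mem v₀ hQv₀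
    (bsHom_one_apply _).symm h hh v₀ hQv₀ (by rw [bsHom_mkV, mul_one])
  refine ⟨lst, hmem, by rw [hprod]; group, ?_⟩
  omega
end MASTER
section FINAL
variable {G : Type u} [Group G] {G₁ G₂ C : Subgroup G} {H : Subgroup G}

lemma exists_nat_bound {α : Type u_1} {S : Set α} (hS : S.Finite) (f : α → ℕ) :
    ∃ c : ℕ, ∀ x ∈ S, f x ≤ c := by
  classical
  exact ⟨hS.toFinset.sup f, fun x hx => Finset.le_sup (hS.mem_toFinset.2 hx)⟩

lemma list_lift {F : Set G} (hFH : ∀ g ∈ F, g ∈ H) :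
    ∀ (lst : List G), (∀ f ∈ lst, f ∈ F) → ∀ h : ↥H, lst.prod = (h : G) →
    ∃ L : List ↥H, (∀ y ∈ L, (y : G) ∈ F) ∧ L.prod = h ∧ L.length = lst.length := by
  intro lst
  induction lst with
  | nil =>
      intro _ h hp
      have h1 : h = 1 := Subtype.ext (by simpa using hp.symm)
      exact ⟨[], by simp, by simp [h1], by simp⟩
  | cons f t ih =>
      intro hmem h hp
      have hfF := hmem f (List.mem_cons_self)
      have hfH := hFH f hfF
      have ht : t.prod = (((⟨f, hfH⟩ : ↥H)⁻¹ * h : ↥H) : G) := by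
        rw [List.prod_cons] at hp
        push_cast
        rw [← hp]
        group
      obtain ⟨L', hL1, hL2, hL3⟩ := ih (fun z hz => hmem z (List.mem_cons_of_mem _ hz))
        ((⟨f, hfH⟩ : ↥H)⁻¹ * h) ht
      refine ⟨⟨f, hfH⟩ :: L', ?_, ?_, by simp [hL3]⟩
      · intro y hy
        rcases List.mem_cons.1 hy with rfl | hy
        exacts [hfF, hL1 y hy]
      · rw [List.prod_cons, hL2]
        group

/-- The distinguished generating set of `H` with linear word-length bound. -/
lemma exists_good_gen_H (amal : IsAmalgamatedFreeProduct G₁ G₂ C) (hH : H.FG)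
    (htriv : ∀ g : G,
      H.map (MulAut.conj g⁻¹).toMonoidHom ⊓ G₁ = ⊥ ∧
      H.map (MulAut.conj g⁻¹).toMonoidHom ⊓ G₂ = ⊥) :
    ∃ Y₀ : Set ↥H, IsSymmGen Y₀ ∧
      ∀ h : ↥H, ∃ L : List ↥H, (∀ y ∈ L, y ∈ Y₀) ∧ L.prod = h ∧
        L.length ≤ 2 * wordLength ((G₁ : Set G) ∪ (G₂ : Set G)) (h : G) + 2 := by
  obtain ⟨F, hFfin, hFH, hFsym, hFgen⟩ := exists_good_gen amal hH htriv
  refine ⟨{y : ↥H | (y : G) ∈ F}, ⟨?_, ?_, ?_⟩, ?_⟩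
  · exact Set.Finite.preimage (fun a _ b _ hab => Subtype.ext hab) hFfin
  · intro y hy
    exact hFsym _ hy
  · rw [eq_top_iff]
    intro h _
    obtain ⟨lst, hmem, hprod, _⟩ := hFgen (h : G) h.2
    obtain ⟨L, hL1, hL2, _⟩ := list_lift hFH lst hmem h hprod
    rw [← hL2]
    exact list_prod_mem (fun y hy => Subgroup.subset_closure (hL1 y hy))
  · intro h
    obtain ⟨lst, hmem, hprod, hlen⟩ := hFgen (h : G) h.2
    obtain ⟨L, hL1, hL2, hL3⟩ := list_lift hFH lst hmem h hprod
    exact ⟨L, hL1, hL2, by omega⟩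

/-- The quantitative bound for arbitrary symmetric generating sets. -/
lemma main_bound (amal : IsAmalgamatedFreeProduct G₁ G₂ C) (hH : H.FG)
    (htriv : ∀ g : G,
      H.map (MulAut.conj g⁻¹).toMonoidHom ⊓ G₁ = ⊥ ∧
      H.map (MulAut.conj g⁻¹).toMonoidHom ⊓ G₂ = ⊥)
    (Y : Set ↥H) (hY : IsSymmGen Y) (X : Set G) (hX : IsSymmGen X) :
    ∃ c : ℕ, ∀ h : ↥H, wordLength Y h ≤ c * wordLength X (h : G) + c := by
  classical
  obtain ⟨Y₀, hY₀, hbound⟩ := exists_good_gen_H amal hH htriv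
  have hsup : Subgroup.closure ((G₁ : Set G) ∪ (G₂ : Set G)) = ⊤ := by
    rw [Subgroup.closure_union, Subgroup.closure_eq, Subgroup.closure_eq, amal.sup_eq_top]
  have hsym : ∀ x ∈ ((G₁ : Set G) ∪ (G₂ : Set G)), x⁻¹ ∈ ((G₁ : Set G) ∪ (G₂ : Set G)) := by
    rintro x (hx | hx)
    · exact Or.inl (G₁.inv_mem hx)
    · exact Or.inr (G₂.inv_mem hx)
  -- c₂ : compare the syllable length with `wordLength X`
  obtain ⟨c₂, hc₂⟩ := exists_nat_bound hX.1 (wordLength ((G₁ : Set G) ∪ (G₂ : Set G)))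
  have hNX : ∀ g : G, wordLength ((G₁ : Set G) ∪ (G₂ : Set G)) g ≤ c₂ * wordLength X g := by
    intro g
    refine wordLength_le_mul_wordLength hX.2.1 hX.2.2 ?_ g
    intro x hx
    obtain ⟨l, h1, h2, h3⟩ := exists_word_length_eq hsym hsup x
    exact ⟨l, h1, h2, h3.le.trans (hc₂ x hx)⟩
  -- c₁ : compare `wordLength Y` with words in `Y₀`
  obtain ⟨c₁, hc₁⟩ := exists_nat_bound hY₀.1 (wordLength Y)
  have hYY₀ : ∀ y ∈ Y₀, ∃ l : List ↥H, (∀ z ∈ l, z ∈ Y) ∧ l.prod = y ∧ l.length ≤ c₁ := by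
    intro y hy
    obtain ⟨l, h1, h2, h3⟩ := exists_word_length_eq hY.2.1 hY.2.2 y
    exact ⟨l, h1, h2, h3.le.trans (hc₁ y hy)⟩
  refine ⟨c₁ * (2 * c₂) + 2 * c₁ + 1, ?_⟩
  intro h
  obtain ⟨L, hL1, hL2, hL3⟩ := hbound h
  obtain ⟨L₂, hM1, hM2, hM3⟩ := exists_word_of_letter_words hYY₀ L hL1
  have hwl : wordLength Y h ≤ c₁ * L.length := by
    rw [← hL2, ← hM2]
    exact (wordLength_le_of_word hM1).trans hM3
  have hN := hNX (h : G)
  have : wordLength Y h ≤ c₁ * (2 * (c₂ * wordLength X (h : G)) + 2) := by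
    calc wordLength Y h ≤ c₁ * L.length := hwl
      _ ≤ c₁ * (2 * wordLength ((G₁ : Set G) ∪ (G₂ : Set G)) (h : G) + 2) :=
          Nat.mul_le_mul_left _ hL3
      _ ≤ c₁ * (2 * (c₂ * wordLength X (h : G)) + 2) := by
          exact Nat.mul_le_mul_left _ (by omega)
  nlinarith [this]

end FINAL

lemma cast_bound_helper (n m k : ℕ) (hn : n ≤ k * m + k) :
    (n : ℝ) ≤ ((k : ℝ) + 1) * m + ((k : ℝ) + 1) := by
  have h1 : (n : ℝ) ≤ (k : ℝ) * m + k := by exact_mod_cast hn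
  nlinarith [Nat.cast_nonneg (α := ℝ) m]

/-- **Corollary 4.** A finitely generated subgroup of an amalgam meeting all conjugates of
the factors trivially is quasi-isometrically embedded; if `G` is moreover hyperbolic it is
quasiconvex. -/
theorem trivial_intersections_qi_embedded {G : Type u} [Group G]
    (G₁ G₂ C : Subgroup G)
    (amal : IsAmalgamatedFreeProduct G₁ G₂ C)
    (hGfg : Group.FG G) (hCfg : C.FG)
    (H : Subgroup G) (hH : H.FG)
    (htriv : ∀ g : G,
      H.map (MulAut.conj g⁻¹).toMonoidHom ⊓ G₁ = ⊥ ∧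
      H.map (MulAut.conj g⁻¹).toMonoidHom ⊓ G₂ = ⊥) :
    (∀ Y : Set ↥H, IsSymmGen Y → ∀ X : Set G, IsSymmGen X →
       ∃ C' : ℝ, 0 < C' ∧
         ∀ h : ↥H, (wordLength Y h : ℝ) ≤ C' * (wordLength X (h : G) : ℝ) + C') ∧
    (IsWordHyperbolic G → IsQuasiconvex H) := by
  constructor
  · intro Y hY X hX
    obtain ⟨c, hc⟩ := main_bound amal hH htriv Y hY X hX
    refine ⟨(c : ℝ) + 1, by positivity, ?_⟩
    intro h
    exact cast_bound_helper _ _ _ (hc h)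
  · intro _
    obtain ⟨Y₀, hY₀, -⟩ := exists_good_gen_H amal hH htriv
    obtain ⟨S, hScl, hSfin⟩ := Group.fg_iff.1 hGfg
    have hX₀ : IsSymmGen (S ∪ (fun x => x⁻¹) '' S) := by
      refine ⟨hSfin.union (hSfin.image _), ?_, ?_⟩
      · rintro x (hx | ⟨y, hy, rfl⟩)
        · exact Or.inr ⟨x, hx, rfl⟩
        · exact Or.inl (by simpa using hy)
      · exact eq_top_iff.2 (hScl ▸ Subgroup.closure_mono Set.subset_union_left)
    obtain ⟨c, hc⟩ := main_bound amal hH htriv Y₀ hY₀ _ hX₀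
    exact ⟨Y₀, hY₀, _, hX₀, (c : ℝ) + 1, by positivity,
      fun a => cast_bound_helper _ _ _ (hc a)⟩
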